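/- Let p > 2 and, for each k ∈ ℕ ∪ {0}, let δ_k, a_k be the numbers defined by the bubble recurrences, and set E_k = 2·a_k/δ_k^{p−1}. Then for every k ∈ ℕ ∪ {0}: δ_k^{p−1}·Σ_{i=0}^{k} E_i = 2 + a_k. -/
import Mathlib


open Filter

/-- The bubble sequences `(a_k)`, `(δ_k)` for `p > 2`: `a₀ = 2`, `δ₀ = 1`, and for `k ≥ 1`,
`δ_k ∈ (0, δ_{k-1})` solves `(2p/(2+a_{k-1}))(1 - δ_k/δ_{k-1}) - 1 + (δ_k/δ_{k-1})^p = 0`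
and `a_k = 2 - (δ_k/δ_{k-1})^{p-1} (2 + a_{k-1}) ∈ (0,2)`. -/
def IsBubbleSeq (p : ℝ) (a δ : ℕ → ℝ) : Prop :=
  a 0 = 2 ∧ δ 0 = 1 ∧
  ∀ k : ℕ,
    δ (k + 1) ∈ Set.Ioo 0 (δ k) ∧
    2 * p / (2 + a k) * (1 - δ (k + 1) / δ k) - 1 + (δ (k + 1) / δ k) ^ p = 0 ∧
    a (k + 1) = 2 - (δ (k + 1) / δ k) ^ (p - 1) * (2 + a k) ∧
    a (k + 1) ∈ Set.Ioo (0:ℝ) 2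

/-- Lemma 2.10 of the paper. With `E_k = 2 a_k / δ_k^{p-1}`, one has
`δ_k^{p-1} ∑_{i=0}^k E_i = 2 + a_k` for all `k`. -/
theorem statement8 (p : ℝ) (hp : 2 < p) (a δ : ℕ → ℝ) (hb : IsBubbleSeq p a δ)
    (E : ℕ → ℝ) (hE : ∀ k, E k = 2 * a k / δ k ^ (p - 1)) :
    ∀ k : ℕ, δ k ^ (p - 1) * ∑ i ∈ Finset.range (k + 1), E i = 2 + a k := by
  obtain ⟨ha0, hd0, hrec⟩ := hb
  have hdpos : ∀ k, 0 < δ k := by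
    intro k
    induction k with
    | zero => rw [hd0]; norm_num
    | succ n ih => exact (hrec n).1.1
  intro k
  induction k with
  | zero =>
    simp [hE, ha0, hd0]; norm_num
  | succ n ih =>
    have hdn := hdpos n
    have hdn1 := hdpos (n + 1)
    have hrpow : 0 < δ n ^ (p - 1) := Real.rpow_pos_of_pos hdn _
    have hdivpow : (δ (n + 1) / δ n) ^ (p - 1) = δ (n + 1) ^ (p - 1) / δ n ^ (p - 1) :=
      Real.div_rpow hdn1.le hdn.le _
    have han1 := (hrec n).2.2.1
    rw [Finset.sum_range_succ, mul_add, hE (n + 1)]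
    have hsum : ∑ i ∈ Finset.range (n + 1), E i = (2 + a n) / δ n ^ (p - 1) := by
      field_simp at ih ⊢
      linarith [ih]
    rw [hsum]
    have : δ (n + 1) ^ (p - 1) * ((2 + a n) / δ n ^ (p - 1)) =
        (δ (n + 1) / δ n) ^ (p - 1) * (2 + a n) := by
      rw [hdivpow]; ring
    rw [this]
    have h2 : δ (n + 1) ^ (p - 1) * (2 * a (n + 1) / δ (n + 1) ^ (p - 1)) = 2 * a (n + 1) := by
      field_simp
    rw [h2, han1]
    ring
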